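/- Let n ≥ 5 be odd. There is a constant C, depending only on n, such that for every integer k with 0 ≤ k ≤ (n−1)/2, every 0 < λ ≤ 1 and every r > 0 with λr ≥ 1, one has |∂_λ^k g_n(λ, r)| ≤ C λ^{n−2−k}. Moreover, for every integer k ≥ (n+3)/2 there is a constant C_k, depending only on n and k, such that for all λ > 0 and r > 0 with λr ≥ 1, |∂_λ^k g_n(λ, r)| ≤ C_k λ^{(n−3)/2} r^{k − (n−1)/2}. -/

import Mathlib

open MeasureTheory Complex Real Finset

/-- The Green's function constant `c₀(n) = Γ(n/2 − 1)/(4 π^{n/2})`. -/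
noncomputable def green0 (n : ℕ) : ℝ :=
  Real.Gamma ((n : ℝ) / 2 - 1) / (4 * Real.pi ^ ((n : ℝ) / 2))

/-- The constant `C_n = c₀(n) · ((n−3)/2)!/(n−3)!`. -/
noncomputable def resC (n : ℕ) : ℝ :=
  green0 n * (Nat.factorial ((n - 3) / 2)) / (Nat.factorial (n - 3))

/-- The kernel `g_n(λ, r)` of the limiting free resolvent `(−Δ − λ² − i0)^{−1}` on `ℝ^n`
for odd `n ≥ 3`. -/
noncomputable def gker (n : ℕ) (lam r : ℝ) : ℂ :=
  (resC n : ℂ) * Complex.exp (Complex.I * (lam : ℂ) * (r : ℂ)) / (r : ℂ) ^ (n - 2) *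
    ∑ l ∈ Finset.range ((n - 3) / 2 + 1),
      ((Nat.factorial (n - 3 - l) : ℂ) /
          ((Nat.factorial l : ℂ) * (Nat.factorial ((n - 3) / 2 - l) : ℂ))) *
        ((-2) * Complex.I * (r : ℂ) * (lam : ℂ)) ^ l

private lemma monomial_hasDerivAt (c : ℂ) (m : ℕ) (t : ℝ) :
    HasDerivAt (fun s : ℝ => (s:ℂ)^m * Complex.exp (c * s))
      ((m : ℂ) * (t:ℂ)^(m-1) * Complex.exp (c*t) + (t:ℂ)^m * (Complex.exp (c*t) * c)) t := by
  have hp : HasDerivAt (fun s : ℝ => (s:ℂ)^m) ((m:ℂ) * (t:ℂ)^(m-1)) t :=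
    (hasDerivAt_pow m (t:ℂ)).comp_ofReal
  have he : HasDerivAt (fun s : ℝ => Complex.exp (c * s)) (Complex.exp (c*t) * c) t := by
    simpa using (((hasDerivAt_id (t:ℂ)).const_mul c).cexp).comp_ofReal
  exact hp.mul he

private lemma iter_formula (p k : ℕ) :
    ∃ E : ℕ → ℕ → ℕ, (∀ l j, l < j → E l j = 0) ∧
      ∀ (c : ℂ) (B : ℕ → ℂ) (t : ℝ),
        iteratedDeriv k
            (fun s : ℝ => ∑ l ∈ Finset.range (p+1), B l * ((s:ℂ)^l * Complex.exp (c*s))) t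
          = ∑ l ∈ Finset.range (p+1), ∑ j ∈ Finset.range (k+1),
              (B l * (E l j : ℂ) * c^(k-j)) * ((t:ℂ)^(l-j) * Complex.exp (c*t)) := by
  induction k with
  | zero =>
      refine ⟨fun l j => if j = 0 then 1 else 0, fun l j h => if_neg (by omega), ?_⟩
      intro c B t
      rw [iteratedDeriv_zero]
      refine Finset.sum_congr rfl fun l _ => ?_
      rw [Finset.sum_range_one]
      simp
  | succ k ih =>
      obtain ⟨E, hE0, hE⟩ := ih
      refine ⟨fun l j => (if 1 ≤ j then E l (j-1) * (l - (j-1)) else 0)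
          + (if j ≤ k then E l j else 0), ?_, ?_⟩
      · intro l j h
        have h2 : (if j ≤ k then E l j else 0) = 0 := by
          split
          · exact hE0 l j h
          · rfl
        have h1 : (if 1 ≤ j then E l (j-1) * (l - (j-1)) else 0) = 0 := by
          split
          · rcases lt_or_ge l (j-1) with hl | hl
            · simp [hE0 l (j-1) hl]
            · have hlj : l - (j-1) = 0 := by omega
              simp [hlj]
          · rfl
        simp [h1, h2]
      · intro c B t
        rw [iteratedDeriv_succ]
        have hfun : iteratedDeriv k
            (fun s : ℝ => ∑ l ∈ Finset.range (p+1), B l * ((s:ℂ)^l * Complex.exp (c*s)))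
            = fun t : ℝ => ∑ l ∈ Finset.range (p+1), ∑ j ∈ Finset.range (k+1),
                (B l * (E l j : ℂ) * c^(k-j)) * ((t:ℂ)^(l-j) * Complex.exp (c*t)) :=
          funext (hE c B)
        rw [hfun]
        have hD : HasDerivAt (fun t : ℝ => ∑ l ∈ Finset.range (p+1), ∑ j ∈ Finset.range (k+1),
              (B l * (E l j : ℂ) * c^(k-j)) * ((t:ℂ)^(l-j) * Complex.exp (c*t)))
            (∑ l ∈ Finset.range (p+1), ∑ j ∈ Finset.range (k+1),
              (B l * (E l j : ℂ) * c^(k-j)) *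
                (((l-j : ℕ):ℂ) * (t:ℂ)^(l-j-1) * Complex.exp (c*t)
                  + (t:ℂ)^(l-j) * (Complex.exp (c*t) * c))) t := by
          refine HasDerivAt.fun_sum fun l _ => HasDerivAt.fun_sum fun j _ => ?_
          exact (monomial_hasDerivAt c (l-j) t).const_mul _
        rw [hD.deriv]
        refine Finset.sum_congr rfl fun l _ => ?_
        have hR : ∑ j ∈ Finset.range (k+1+1),
              (B l * (((if 1 ≤ j then E l (j-1) * (l - (j-1)) else 0)
                + (if j ≤ k then E l j else 0) : ℕ):ℂ) * c^(k+1-j))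
                * ((t:ℂ)^(l-j) * Complex.exp (c*t))
            = (∑ j ∈ Finset.range (k+1+1),
                (B l * (((if 1 ≤ j then E l (j-1) * (l - (j-1)) else 0) : ℕ):ℂ) * c^(k+1-j))
                  * ((t:ℂ)^(l-j) * Complex.exp (c*t)))
            + (∑ j ∈ Finset.range (k+1+1),
                (B l * (((if j ≤ k then E l j else 0) : ℕ):ℂ) * c^(k+1-j))
                  * ((t:ℂ)^(l-j) * Complex.exp (c*t))) := by
          rw [← Finset.sum_add_distrib]
          refine Finset.sum_congr rfl fun j _ => ?_
          push_cast
          ring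
        rw [hR]
        have hX : (∑ j ∈ Finset.range (k+1+1),
              (B l * (((if 1 ≤ j then E l (j-1) * (l - (j-1)) else 0) : ℕ):ℂ) * c^(k+1-j))
                * ((t:ℂ)^(l-j) * Complex.exp (c*t)))
            = ∑ j ∈ Finset.range (k+1),
                (B l * (E l j : ℂ) * c^(k-j))
                  * (((l-j:ℕ):ℂ) * (t:ℂ)^(l-j-1) * Complex.exp (c*t)) := by
          rw [Finset.sum_range_succ']
          simp only [Nat.le_add_left 1, if_pos, Nat.add_sub_cancel, Nat.succ_sub_succ_eq_sub]
          norm_num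
          refine Finset.sum_congr rfl fun i _ => ?_
          rw [show l - (i+1) = l - i - 1 from by omega]
          ring
        have hY : (∑ j ∈ Finset.range (k+1+1),
              (B l * (((if j ≤ k then E l j else 0) : ℕ):ℂ) * c^(k+1-j))
                * ((t:ℂ)^(l-j) * Complex.exp (c*t)))
            = ∑ j ∈ Finset.range (k+1),
                (B l * (E l j : ℂ) * c^(k-j))
                  * ((t:ℂ)^(l-j) * (Complex.exp (c*t) * c)) := by
          rw [Finset.sum_range_succ]
          norm_num
          refine Finset.sum_congr rfl fun j hj => ?_
          have hjk : j ≤ k := by simpa using Nat.lt_succ_iff.mp (Finset.mem_range.mp hj)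
          rw [if_pos hjk, show k+1-j = (k-j)+1 from by omega, pow_succ]
          ring
        rw [hX, hY, ← Finset.sum_add_distrib]
        refine Finset.sum_congr rfl fun j _ => ?_
        ring

/-- The `r`-independent coefficient part of the `l`-th term of the resolvent kernel. -/
noncomputable def gkerKc (n : ℕ) (l : ℕ) : ℂ :=
  (resC n : ℂ) * ((Nat.factorial (n - 3 - l) : ℂ) /
      ((Nat.factorial l : ℂ) * (Nat.factorial ((n - 3) / 2 - l) : ℂ)))
    * ((-2) * Complex.I)^l

private lemma gker_eq (n : ℕ) (r : ℝ) :
    (fun t : ℝ => gker n t r) = fun s : ℝ => ∑ l ∈ Finset.range ((n-3)/2+1),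
      (gkerKc n l * (r:ℂ)^l / (r:ℂ)^(n-2))
        * ((s:ℂ)^l * Complex.exp ((Complex.I * (r:ℂ)) * s)) := by
  funext s
  rw [gker, Finset.mul_sum]
  refine Finset.sum_congr rfl fun l _ => ?_
  have hexp : Complex.exp (Complex.I * (s:ℂ) * (r:ℂ))
      = Complex.exp ((Complex.I * (r:ℂ)) * s) := by ring_nf
  rw [hexp, gkerKc]
  ring

private lemma master (n : ℕ) (k : ℕ) :
    ∃ C : ℝ, 0 < C ∧ ∀ lam r : ℝ, 0 < lam → 0 < r → ∀ T : ℝ, 0 ≤ T →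
      (∀ l j : ℕ, l ≤ (n-3)/2 → j ≤ l → j ≤ k →
          lam ^ (l - j) * (r ^ (l + (k - j)) / r ^ (n-2)) ≤ T) →
      ‖iteratedDeriv k (fun t : ℝ => gker n t r) lam‖ ≤ C * T := by
  obtain ⟨E, hE0, hE⟩ := iter_formula ((n-3)/2) k
  refine ⟨(∑ l ∈ Finset.range ((n-3)/2+1), ∑ j ∈ Finset.range (k+1),
      ‖gkerKc n l‖ * (E l j : ℝ)) + 1, by positivity, ?_⟩
  intro lam r hlam hr T hT hterm
  rw [gker_eq n r, hE (Complex.I * (r:ℂ)) (fun l => gkerKc n l * (r:ℂ)^l / (r:ℂ)^(n-2)) lam]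
  have hexp1 : ‖Complex.exp ((Complex.I * (r:ℂ)) * (lam:ℝ))‖ = 1 := by
    rw [Complex.norm_exp]
    simp [Complex.mul_re]
  have hnorm : ∀ l j : ℕ,
      ‖(gkerKc n l * (r:ℂ)^l / (r:ℂ)^(n-2) * (E l j : ℂ) * (Complex.I * (r:ℂ))^(k-j))
        * (((lam:ℝ):ℂ)^(l-j) * Complex.exp ((Complex.I * (r:ℂ)) * (lam:ℝ)))‖
      = ‖gkerKc n l‖ * (r^l / r^(n-2)) * (E l j : ℝ) * r^(k-j) * lam^(l-j) := by
    intro l j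
    simp only [norm_mul, norm_div, norm_pow, hexp1, Complex.norm_real, Complex.norm_natCast,
      Complex.norm_I, Real.norm_eq_abs, one_mul, mul_one, abs_of_pos hr, abs_of_pos hlam]
    ring
  have hle : ∀ l ∈ Finset.range ((n-3)/2+1), ∀ j ∈ Finset.range (k+1),
      ‖(gkerKc n l * (r:ℂ)^l / (r:ℂ)^(n-2) * (E l j : ℂ) * (Complex.I * (r:ℂ))^(k-j))
        * (((lam:ℝ):ℂ)^(l-j) * Complex.exp ((Complex.I * (r:ℂ)) * (lam:ℝ)))‖
      ≤ (‖gkerKc n l‖ * (E l j : ℝ)) * T := by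
    intro l hl j hj
    rw [hnorm l j]
    rcases le_or_gt j l with hjl | hlj
    · have hl' : l ≤ (n-3)/2 := by have := Finset.mem_range.mp hl; omega
      have hj' : j ≤ k := by have := Finset.mem_range.mp hj; omega
      have key := hterm l j hl' hjl hj'
      have h0 : (0:ℝ) ≤ ‖gkerKc n l‖ * (E l j : ℝ) := by positivity
      calc ‖gkerKc n l‖ * (r^l / r^(n-2)) * (E l j : ℝ) * r^(k-j) * lam^(l-j)
          = (‖gkerKc n l‖ * (E l j : ℝ)) * (lam^(l-j) * (r^(l+(k-j)) / r^(n-2))) := by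
            rw [pow_add]; ring
        _ ≤ (‖gkerKc n l‖ * (E l j : ℝ)) * T := mul_le_mul_of_nonneg_left key h0
    · rw [hE0 l j hlj]
      simp
  calc ‖∑ l ∈ Finset.range ((n-3)/2+1), ∑ j ∈ Finset.range (k+1),
        gkerKc n l * (r:ℂ)^l / (r:ℂ)^(n-2) * (E l j : ℂ) * (Complex.I * (r:ℂ))^(k-j) *
          (((lam:ℝ):ℂ)^(l-j) * Complex.exp ((Complex.I * (r:ℂ)) * (lam:ℝ)))‖
      ≤ ∑ l ∈ Finset.range ((n-3)/2+1), ‖∑ j ∈ Finset.range (k+1),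
        gkerKc n l * (r:ℂ)^l / (r:ℂ)^(n-2) * (E l j : ℂ) * (Complex.I * (r:ℂ))^(k-j) *
          (((lam:ℝ):ℂ)^(l-j) * Complex.exp ((Complex.I * (r:ℂ)) * (lam:ℝ)))‖ :=
        norm_sum_le _ _
    _ ≤ ∑ l ∈ Finset.range ((n-3)/2+1), ∑ j ∈ Finset.range (k+1),
        ‖gkerKc n l * (r:ℂ)^l / (r:ℂ)^(n-2) * (E l j : ℂ) * (Complex.I * (r:ℂ))^(k-j) *
          (((lam:ℝ):ℂ)^(l-j) * Complex.exp ((Complex.I * (r:ℂ)) * (lam:ℝ)))‖ :=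
        Finset.sum_le_sum fun l _ => norm_sum_le _ _
    _ ≤ ∑ l ∈ Finset.range ((n-3)/2+1), ∑ j ∈ Finset.range (k+1),
        (‖gkerKc n l‖ * (E l j : ℝ)) * T :=
        Finset.sum_le_sum fun l hl => Finset.sum_le_sum fun j hj => hle l hl j hj
    _ = (∑ l ∈ Finset.range ((n-3)/2+1), ∑ j ∈ Finset.range (k+1),
        ‖gkerKc n l‖ * (E l j : ℝ)) * T := by
        rw [Finset.sum_mul]
        exact Finset.sum_congr rfl fun l _ => (Finset.sum_mul _ _ _).symm
    _ ≤ ((∑ l ∈ Finset.range ((n-3)/2+1), ∑ j ∈ Finset.range (k+1),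
        ‖gkerKc n l‖ * (E l j : ℝ)) + 1) * T := by
        refine mul_le_mul_of_nonneg_right (by linarith) hT

private lemma pair_bound1 (n : ℕ) (hn : 5 ≤ n) (hodd : Odd n) (k l j : ℕ)
    (hk : k ≤ (n-1)/2) (hl : l ≤ (n-3)/2) (hjl : j ≤ l) (hjk : j ≤ k)
    (lam r : ℝ) (hlam : 0 < lam) (hlam1 : lam ≤ 1) (hr : 0 < r) (h1 : 1 ≤ lam * r) :
    lam ^ (l - j) * (r ^ (l + (k - j)) / r ^ (n-2)) ≤ lam ^ ((n:ℝ) - 2 - (k:ℝ)) := by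
  obtain ⟨w, hw⟩ := hodd
  set m : ℕ := n - 2 - (l + (k - j)) with hm
  have hsum : l + (k - j) + m = n - 2 := by omega
  have hr0 : (r:ℝ) ≠ 0 := ne_of_gt hr
  have hrpow : r ^ (l + (k-j)) / r ^ (n-2) = 1 / r ^ m := by
    rw [← hsum, pow_add]
    field_simp
    rw [← pow_add, ← pow_add]
  have hkey : (1:ℝ) / r ^ m ≤ lam ^ m := by
    rw [div_le_iff₀ (pow_pos hr m)]
    calc (1:ℝ) = 1 ^ m := (one_pow m).symm
      _ ≤ (lam * r) ^ m := pow_le_pow_left₀ (by norm_num) h1 m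
      _ = lam ^ m * r ^ m := mul_pow _ _ _
  have hmono : lam ^ (l-j) * (1/r^m) ≤ lam ^ (l-j) * lam ^ m :=
    mul_le_mul_of_nonneg_left hkey (pow_nonneg hlam.le _)
  rw [hrpow]
  refine hmono.trans_eq ?_
  rw [← pow_add]
  have hnk : (l - j) + m = n - 2 - k := by omega
  rw [hnk]
  have hcast : ((n:ℝ) - 2 - (k:ℝ)) = ((n - 2 - k : ℕ) : ℝ) := by
    have h2 : k ≤ n - 2 := by omega
    have h3 : 2 ≤ n := by omega
    push_cast [Nat.cast_sub h2, Nat.cast_sub h3]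
    ring
  rw [hcast, Real.rpow_natCast]

private lemma cast_half3 (n w : ℕ) (hn : 5 ≤ n) (hw : n = 2 * w + 1) :
    (((n-3)/2 : ℕ) : ℝ) = ((n:ℝ)-3)/2 := by
  have h1 : (n-3)/2 = w - 1 := by omega
  rw [h1, hw]
  push_cast [Nat.cast_sub (by omega : 1 ≤ w)]
  ring

private lemma pair_bound2 (n : ℕ) (hn : 5 ≤ n) (hodd : Odd n) (k l j : ℕ)
    (hl : l ≤ (n-3)/2) (hjl : j ≤ l) (hjk : j ≤ k)
    (lam r : ℝ) (hlam : 0 < lam) (hr : 0 < r) (h1 : 1 ≤ lam * r) :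
    lam ^ (l - j) * (r ^ (l + (k - j)) / r ^ (n-2)) ≤
      lam ^ (((n:ℝ)-3)/2) * r ^ ((k:ℝ) - ((n:ℝ)-1)/2) := by
  obtain ⟨w, hw⟩ := hodd
  set d : ℕ := (n-3)/2 - (l - j) with hd
  have hljd : (l - j) + d = (n-3)/2 := by omega
  have hcast := cast_half3 n w hn hw
  have hL : lam ^ (l-j) * (r ^ (l + (k-j)) / r ^ (n-2))
      = lam ^ (((l-j:ℕ)):ℝ) * r ^ ((((l + (k-j)):ℕ):ℝ) - (((n-2:ℕ)):ℝ)) := by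
    rw [Real.rpow_natCast, Real.rpow_sub hr, Real.rpow_natCast, Real.rpow_natCast]
  rw [hL]
  have h2 : ((l:ℝ) - (j:ℝ)) + (d:ℝ) = ((n:ℝ)-3)/2 := by
    have := congrArg (fun x : ℕ => (x:ℝ)) hljd
    simp only [Nat.cast_add, Nat.cast_sub hjl] at this
    rw [hcast] at this
    linarith
  have hA : ((l - j : ℕ) : ℝ) = ((n:ℝ)-3)/2 + (-(d:ℝ)) := by
    rw [Nat.cast_sub hjl]; linarith
  have hBe : (((l + (k-j)):ℕ):ℝ) - ((n-2:ℕ):ℝ)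
      = ((k:ℝ) - ((n:ℝ)-1)/2) + (-(d:ℝ)) := by
    have e1 : (((l + (k-j)):ℕ):ℝ) = (l:ℝ) + ((k:ℝ) - (j:ℝ)) := by
      push_cast [Nat.cast_sub hjk]; ring
    have e2 : ((n-2:ℕ):ℝ) = (n:ℝ) - 2 := by
      push_cast [Nat.cast_sub (by omega : 2 ≤ n)]; ring
    rw [e1, e2]
    linarith
  rw [hA, hBe, Real.rpow_add hlam, Real.rpow_add hr]
  calc (lam ^ (((n:ℝ)-3)/2) * lam ^ (-(d:ℝ))) * (r ^ ((k:ℝ) - ((n:ℝ)-1)/2) * r ^ (-(d:ℝ)))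
      = (lam ^ (((n:ℝ)-3)/2) * r ^ ((k:ℝ) - ((n:ℝ)-1)/2)) * ((lam * r) ^ (-(d:ℝ))) := by
        rw [Real.mul_rpow hlam.le hr.le]; ring
    _ ≤ (lam ^ (((n:ℝ)-3)/2) * r ^ ((k:ℝ) - ((n:ℝ)-1)/2)) * 1 := by
        refine mul_le_mul_of_nonneg_left ?_ (by positivity)
        exact Real.rpow_le_one_of_one_le_of_nonpos h1
          (neg_nonpos.mpr (Nat.cast_nonneg d))
    _ = lam ^ (((n:ℝ)-3)/2) * r ^ ((k:ℝ) - ((n:ℝ)-1)/2) := mul_one _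

/-- Derivative bounds for the free resolvent kernel in the regime `λ r ≥ 1`:
for `0 ≤ k ≤ (n−1)/2` and `0 < λ ≤ 1`, `|∂_λ^k g_n(λ,r)| ≤ C λ^{n−2−k}`; and for
`k ≥ (n+3)/2`, `|∂_λ^k g_n(λ,r)| ≤ C_k λ^{(n−3)/2} r^{k−(n−1)/2}`. -/
theorem resolvent_derivative_bounds (n : ℕ) (hn : 5 ≤ n) (hodd : Odd n) :
    (∃ C : ℝ, 0 < C ∧ ∀ k : ℕ, k ≤ (n - 1) / 2 → ∀ lam : ℝ, 0 < lam → lam ≤ 1 →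
        ∀ r : ℝ, 0 < r → 1 ≤ lam * r →
          ‖iteratedDeriv k (fun t : ℝ => gker n t r) lam‖ ≤
            C * lam ^ ((n : ℝ) - 2 - (k : ℝ))) ∧
    (∀ k : ℕ, (n + 3) / 2 ≤ k → ∃ C : ℝ, 0 < C ∧ ∀ lam : ℝ, 0 < lam →
        ∀ r : ℝ, 0 < r → 1 ≤ lam * r →
          ‖iteratedDeriv k (fun t : ℝ => gker n t r) lam‖ ≤
            C * lam ^ (((n : ℝ) - 3) / 2) * r ^ ((k : ℝ) - ((n : ℝ) - 1) / 2)) := by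
  constructor
  · choose Cf hCpos hC using fun k => master n k
    refine ⟨∑ i ∈ Finset.range ((n-1)/2 + 1), Cf i, ?_, ?_⟩
    · exact Finset.sum_pos (fun i _ => hCpos i) ⟨0, Finset.mem_range.mpr (by omega)⟩
    · intro k hk lam hlam hlam1 r hr h1
      have hCk : Cf k ≤ ∑ i ∈ Finset.range ((n-1)/2+1), Cf i :=
        Finset.single_le_sum (fun i _ => (hCpos i).le) (Finset.mem_range.mpr (by omega))
      have hT : (0:ℝ) ≤ lam ^ ((n:ℝ)-2-(k:ℝ)) := Real.rpow_nonneg hlam.le _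
      have hb := hC k lam r hlam hr _ hT
        (fun l j hl hjl hjk => pair_bound1 n hn hodd k l j hk hl hjl hjk lam r hlam hlam1 hr h1)
      exact hb.trans (mul_le_mul_of_nonneg_right hCk hT)
  · intro k hk
    obtain ⟨C, hCpos, hC⟩ := master n k
    refine ⟨C, hCpos, ?_⟩
    intro lam hlam r hr h1
    have hT : (0:ℝ) ≤ lam ^ (((n:ℝ)-3)/2) * r ^ ((k:ℝ)-((n:ℝ)-1)/2) := by positivity
    have hb := hC lam r hlam hr _ hT
      (fun l j hl hjl hjk => pair_bound2 n hn hodd k l j hl hjl hjk lam r hlam hr h1)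
    rw [mul_assoc]
    exact hb
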